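/- (Strong Hammersley-Clifford theorem, part 2.) Let X ⊆ 𝒜^𝒱 be a topological Markov field with a safe symbol, invariant under a subgroup G ⊆ Aut(𝒢). Then every G-invariant Markov cocycle on X is a Gibbs cocycle with some G-invariant nearest neighbour interaction, i.e. 𝐌^G_X = 𝐆^G_X. -/

import Mathlib

open scoped Classical

namespace HC

variable {V : Type*} {A : Type*}

/-- The external vertex boundary of a set of vertices. -/
def boundary (G : SimpleGraph V) (F : Set V) : Set V :=
  {u | u ∉ F ∧ ∃ v ∈ F, G.Adj u v}

/-- The language of `X` on `F`: the set of patterns on `F` appearing in `X`. -/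
def lang (X : Set (V → A)) (F : Set V) : Set (F → A) :=
  F.restrict '' X

/-- The `n`-ball around `v` in the graph metric. -/
def ballSet (G : SimpleGraph V) (v : V) (n : ℕ) : Set V :=
  {u | ∃ p : G.Walk v u, p.length ≤ n}

/-- Asymptotic pairs: pairs of configurations in `X` differing at finitely many sites. -/
def Delta (X : Set (V → A)) : Set ((V → A) × (V → A)) :=
  {p | p.1 ∈ X ∧ p.2 ∈ X ∧ {v | p.1 v ≠ p.2 v}.Finite}

/-- Topological Markov field. -/
def IsTMF [TopologicalSpace A] (G : SimpleGraph V) (X : Set (V → A)) : Prop :=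
  IsClosed X ∧
    ∀ x ∈ X, ∀ y ∈ X, ∀ F : Set V, F.Finite →
      (∀ u ∈ boundary G F, x u = y u) →
      (fun v => if v ∈ F then x v else y v) ∈ X

/-- Nearest neighbour constraint space: the set of configurations avoiding a
set of forbidden patterns on finite cliques. -/
def IsNNConstraint (G : SimpleGraph V) (X : Set (V → A)) : Prop :=
  ∃ 𝓕 : ∀ F : Set V, Set (F → A),
    X = {x : V → A | ∀ F : Set V, F.Finite → G.IsClique F → F.restrict x ∉ 𝓕 F}

/-- `s` is a safe symbol for `X`. -/
def IsSafeSymbol (X : Set (V → A)) (s : A) : Prop :=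
  ∀ x ∈ X, ∀ S : Set V, (fun v => if v ∈ S then x v else s) ∈ X

/-- The pattern `(c at v, d at w)` belongs to the language of `X`. -/
def edgeB (X : Set (V → A)) (v w : V) (c d : A) : Prop :=
  ∃ x ∈ X, x v = c ∧ x w = d

/-- The single-site pattern `c at v` belongs to the language of `X`. -/
def siteB (X : Set (V → A)) (v : V) (c : A) : Prop :=
  ∃ x ∈ X, x v = c

/-- The pairs `(x,y)` and `(z,w)` are Markov-similar. -/
def MarkovSimilar (G : SimpleGraph V) (x y z w : V → A) : Prop :=
  ∃ S : Set V, S.Finite ∧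
    (∀ u, u ∉ S → x u = y u ∧ z u = w u) ∧
    (∀ u, u ∈ S ∪ boundary G S → x u = z u ∧ y u = w u)

/-- A Markov cocycle on `X` (realised as a real function on pairs of
configurations, vanishing off the asymptotic relation `Δ_X`). -/
def IsMarkovCocycle (G : SimpleGraph V) (X : Set (V → A))
    (M : (V → A) → (V → A) → ℝ) : Prop :=
  (∀ x y : V → A, (x, y) ∉ Delta X → M x y = 0) ∧
  (∀ x y z : V → A, (x, y) ∈ Delta X → (y, z) ∈ Delta X → M x z = M x y + M y z) ∧
  (∀ x y z w : V → A, (x, y) ∈ Delta X → (z, w) ∈ Delta X →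
    MarkovSimilar G x y z w → M x y = M z w)

/-- A nearest neighbour interaction: a real weight for each pattern,
vanishing on patterns whose domain is not a finite clique. -/
def IsNNInteraction (G : SimpleGraph V) (U : ∀ F : Set V, (F → A) → ℝ) : Prop :=
  ∀ F : Set V, ¬(F.Finite ∧ G.IsClique F) → ∀ p : F → A, U F p = 0

/-- `Σ_{F ⊆ V finite} (U(y|_F) - U(x|_F))`. -/
noncomputable def gibbsSum (U : ∀ F : Set V, (F → A) → ℝ) (x y : V → A) : ℝ :=
  ∑ᶠ F : Set V, (U F (F.restrict y) - U F (F.restrict x))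

/-- A Gibbs cocycle with some nearest neighbour interaction. -/
def IsGibbsCocycle (G : SimpleGraph V) (X : Set (V → A))
    (M : (V → A) → (V → A) → ℝ) : Prop :=
  (∀ x y : V → A, (x, y) ∉ Delta X → M x y = 0) ∧
  ∃ U : ∀ F : Set V, (F → A) → ℝ, IsNNInteraction G U ∧
    ∀ x y : V → A, (x, y) ∈ Delta X → M x y = gibbsSum U x y

/-- The space `𝐌_X` of Markov cocycles on `X`. -/
def markovSet (G : SimpleGraph V) (X : Set (V → A)) :
    Set ((V → A) → (V → A) → ℝ) :=
  {M | IsMarkovCocycle G X M}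

/-- The space `𝐆_X` of Gibbs cocycles with nearest neighbour interactions on `X`. -/
def gibbsSet (G : SimpleGraph V) (X : Set (V → A)) :
    Set ((V → A) → (V → A) → ℝ) :=
  {M | IsGibbsCocycle G X M}

/-- `X` is Hammersley-Clifford: `𝐌_X = 𝐆_X`. -/
def IsHammersleyClifford (G : SimpleGraph V) (X : Set (V → A)) : Prop :=
  markovSet G X = gibbsSet G X

/-- The action of a permutation of the vertices on configurations. -/
def confAct (g : Equiv.Perm V) (x : V → A) : V → A :=
  fun v => x (g⁻¹ v)

/-- `S` consists of automorphisms of the graph `G`. -/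
def PreservesAdj (G : SimpleGraph V) (S : Subgroup (Equiv.Perm V)) : Prop :=
  ∀ g ∈ S, ∀ u v : V, G.Adj (g u) (g v) ↔ G.Adj u v

/-- `X` is invariant under the subgroup `S`. -/
def InvariantSpace (S : Subgroup (Equiv.Perm V)) (X : Set (V → A)) : Prop :=
  ∀ g ∈ S, confAct g '' X = X

/-- The cocycle `M` is `S`-invariant. -/
def InvariantCocycle (S : Subgroup (Equiv.Perm V)) (M : (V → A) → (V → A) → ℝ) : Prop :=
  ∀ g ∈ S, ∀ x y : V → A, M (confAct g x) (confAct g y) = M x y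

/-- The interaction `U` is `S`-invariant: `U(ga) = U(a)` for every pattern `a`. -/
def InvariantInteraction (S : Subgroup (Equiv.Perm V))
    (U : ∀ F : Set V, (F → A) → ℝ) : Prop :=
  ∀ g ∈ S, ∀ F : Set V, ∀ x : V → A,
    U (⇑g '' F) ((⇑g '' F).restrict (confAct g x)) = U F (F.restrict x)

/-- The space `𝐌^G_X` of `S`-invariant Markov cocycles on `X`. -/
def markovSetInv (G : SimpleGraph V) (S : Subgroup (Equiv.Perm V)) (X : Set (V → A)) :
    Set ((V → A) → (V → A) → ℝ) :=
  {M | IsMarkovCocycle G X M ∧ InvariantCocycle S M}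

/-- The space `𝐆^G_X` of Gibbs cocycles with `S`-invariant nearest neighbour
interactions on `X`. -/
def gibbsSetInv (G : SimpleGraph V) (S : Subgroup (Equiv.Perm V)) (X : Set (V → A)) :
    Set ((V → A) → (V → A) → ℝ) :=
  {M | (∀ x y : V → A, (x, y) ∉ Delta X → M x y = 0) ∧
    ∃ U : ∀ F : Set V, (F → A) → ℝ, IsNNInteraction G U ∧ InvariantInteraction S U ∧
      ∀ x y : V → A, (x, y) ∈ Delta X → M x y = gibbsSum U x y}

/-- `X` is `G`-Hammersley-Clifford: `𝐌^G_X = 𝐆^G_X`. -/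
def IsGHammersleyClifford (G : SimpleGraph V) (S : Subgroup (Equiv.Perm V))
    (X : Set (V → A)) : Prop :=
  markovSetInv G S X = gibbsSetInv G S X

/-- The symbol `a` can be folded into the symbol `b` in `X`. -/
def FoldsInto (G : SimpleGraph V) (X : Set (V → A)) (a b : A) : Prop :=
  a ≠ b ∧
    ∀ v₁ v₂ v₃ : V, G.Adj v₁ v₂ → G.Adj v₂ v₃ → ∀ c : A,
      edgeB X v₁ v₂ a c →
        edgeB X v₁ v₂ b c ∧ edgeB X v₂ v₃ c b ∧
          ∃ x ∈ X, ∀ u ∈ boundary G (ballSet G v₁ 1), x u = b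

/-- `X ∩ (𝒜∖{a})^𝒱`. -/
def foldSpace (X : Set (V → A)) (a : A) : Set (V → A) :=
  X ∩ {x | ∀ v, x v ≠ a}

/-- `Y` is a fold of `X` (and `X` an unfold of `Y`). -/
def IsFoldOf (G : SimpleGraph V) (Y X : Set (V → A)) : Prop :=
  ∃ a b : A, FoldsInto G X a b ∧ Y = foldSpace X a

/-- `P₁, P₂` are the partite classes of a bipartition of `G`. -/
def IsBipartition (G : SimpleGraph V) (P₁ P₂ : Set V) : Prop :=
  (∀ v : V, v ∈ P₁ ∨ v ∈ P₂) ∧ Disjoint P₁ P₂ ∧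
    ∀ u v : V, G.Adj u v → (u ∈ P₁ ∧ v ∈ P₂) ∨ (u ∈ P₂ ∧ v ∈ P₁)

/-- `G` is bipartite. -/
def Bipartite (G : SimpleGraph V) : Prop :=
  ∃ P₁ P₂ : Set V, IsBipartition G P₁ P₂

/-- `θ^v_c(x)`: change the value of `x` at `v` to `c`. -/
noncomputable def theta (x : V → A) (v : V) (c : A) : V → A :=
  fun u => if u = v then c else x u

/-- `θ^{w₁,…,w_r}_{c₁,…,c_r}(x)`: change the value of `x` at each `w i` to `c i`. -/
noncomputable def multiUpdate (x : V → A) {r : ℕ} (w : Fin r → V) (c : Fin r → A) :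
    V → A :=
  fun u => if h : ∃ i, w i = u then c h.choose else x u

/-- Restriction of a cocycle to the asymptotic pairs of a subspace `Y`. -/
noncomputable def restrictCocycle (Y : Set (V → A)) (M : (V → A) → (V → A) → ℝ) :
    (V → A) → (V → A) → ℝ :=
  fun x y => if (x, y) ∈ Delta Y then M x y else 0

/-- The pair `(x,y)` is `U`-good for the cocycle `M`. -/
def VGood (M : (V → A) → (V → A) → ℝ) (U : ∀ F : Set V, (F → A) → ℝ)
    (x y : V → A) : Prop :=
  M x y = gibbsSum U x y

/-- `𝒱₁`: vertices `v` admitting a neighbour `w` with `(a,a) ∈ ℬ_{v,w}(X)`. -/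
def Vone (G : SimpleGraph V) (X : Set (V → A)) (a : A) : Set V :=
  {v | ∃ w, G.Adj v w ∧ edgeB X v w a a}

/-- `𝒱₂`: vertices not in `𝒱₁` where the symbol `a` can appear. -/
def Vtwo (G : SimpleGraph V) (X : Set (V → A)) (a : A) : Set V :=
  {v | v ∉ Vone G X a ∧ siteB X v a}

/-- The space of graph homomorphisms from `G` to `H`, as a configuration space. -/
def homSpace {B : Type*} (G : SimpleGraph V) (H : SimpleGraph B) : Set (V → B) :=
  {x | ∀ v w : V, G.Adj v w → H.Adj (x v) (x w)}

section HCAux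


lemma mobius_double (F : Finset V) :
    ∀ h : Finset V → ℝ,
      ∑ E ∈ F.powerset, ∑ E' ∈ E.powerset, (-1:ℝ)^(E.card - E'.card) * h E' = h F := by
  induction F using Finset.induction_on with
  | empty => intro h; simp
  | insert a F ha ih =>
    intro h
    rw [Finset.sum_powerset_insert ha, ih h]
    have h2 : ∀ E ∈ F.powerset,
        ∑ E' ∈ (insert a E).powerset, (-1:ℝ)^((insert a E).card - E'.card) * h E'
          = (- ∑ E' ∈ E.powerset, (-1:ℝ)^(E.card - E'.card) * h E')
            + ∑ E' ∈ E.powerset, (-1:ℝ)^(E.card - E'.card) * h (insert a E') := by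
      intro E hE
      have haE : a ∉ E := fun hc => ha (Finset.mem_powerset.1 hE hc)
      rw [Finset.sum_powerset_insert haE, Finset.card_insert_of_notMem haE]
      congr 1
      · rw [← Finset.sum_neg_distrib]
        refine Finset.sum_congr rfl fun E' hE' => ?_
        have hle : E'.card ≤ E.card := Finset.card_le_card (Finset.mem_powerset.1 hE')
        rw [show E.card + 1 - E'.card = (E.card - E'.card) + 1 from by omega, pow_succ]
        ring
      · refine Finset.sum_congr rfl fun E' hE' => ?_
        have haE' : a ∉ E' := fun hc => ha (Finset.mem_powerset.1 hE (Finset.mem_powerset.1 hE' hc))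
        have hle : E'.card ≤ E.card := Finset.card_le_card (Finset.mem_powerset.1 hE')
        rw [Finset.card_insert_of_notMem haE']
        congr 2
        omega
    rw [Finset.sum_congr rfl h2, Finset.sum_add_distrib, Finset.sum_neg_distrib, ih h,
      ih (fun E => h (insert a E))]
    ring

lemma single_cancel (h : Finset V → ℝ) (F : Finset V) (v : V) (hv : v ∈ F)
    (key : ∀ B ⊆ F.erase v, h (insert v B) = h B) :
    ∑ E ∈ F.powerset, (-1:ℝ)^(F.card - E.card) * h E = 0 := by
  have hF : F = insert v (F.erase v) := (Finset.insert_erase hv).symm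
  have hv1 : v ∉ F.erase v := Finset.notMem_erase v F
  rw [hF, Finset.sum_powerset_insert hv1, Finset.card_insert_of_notMem hv1]
  rw [← Finset.sum_add_distrib]
  refine Finset.sum_eq_zero fun B hB => ?_
  have hBsub := Finset.mem_powerset.1 hB
  have hvB : v ∉ B := fun hc => hv1 (hBsub hc)
  have hle : B.card ≤ (F.erase v).card := Finset.card_le_card hBsub
  rw [key B hBsub, Finset.card_insert_of_notMem hvB,
    show (F.erase v).card + 1 - B.card = ((F.erase v).card - B.card) + 1 from by omega,
    show (F.erase v).card + 1 - (B.card + 1) = (F.erase v).card - B.card from by omega,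
    pow_succ]
  ring

lemma pair_cancel (h : Finset V → ℝ) (F : Finset V) (v w : V) (hv : v ∈ F) (hw : w ∈ F)
    (hvw : v ≠ w)
    (key : ∀ B ⊆ (F.erase v).erase w,
      h (insert v B) - h B = h (insert v (insert w B)) - h (insert w B)) :
    ∑ E ∈ F.powerset, (-1:ℝ)^(F.card - E.card) * h E = 0 := by
  set F₂ := (F.erase v).erase w with hF₂
  have hw1 : w ∈ F.erase v := Finset.mem_erase.2 ⟨Ne.symm hvw, hw⟩
  have hwF₂ : w ∉ F₂ := Finset.notMem_erase w _
  have hvF₂ : v ∉ F₂ := fun hc => Finset.notMem_erase v F (Finset.mem_of_mem_erase hc)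
  have hF1 : insert w F₂ = F.erase v := Finset.insert_erase hw1
  have hF : F = insert v (insert w F₂) := by rw [hF1]; exact (Finset.insert_erase hv).symm
  have hvwF₂ : v ∉ insert w F₂ := by rw [hF1]; exact Finset.notMem_erase v F
  rw [hF, Finset.sum_powerset_insert hvwF₂, Finset.sum_powerset_insert hwF₂,
    Finset.sum_powerset_insert hwF₂, Finset.card_insert_of_notMem hvwF₂,
    Finset.card_insert_of_notMem hwF₂]
  rw [← Finset.sum_add_distrib, ← Finset.sum_add_distrib, ← Finset.sum_add_distrib]
  refine Finset.sum_eq_zero fun B hB => ?_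
  have hBsub := Finset.mem_powerset.1 hB
  have hwB : w ∉ B := fun hc => hwF₂ (hBsub hc)
  have hvB : v ∉ B := fun hc => hvF₂ (hBsub hc)
  have hvwB : v ∉ insert w B := by simp [Finset.mem_insert, hvw, hvB]
  have hle : B.card ≤ F₂.card := Finset.card_le_card hBsub
  have c1 : (insert w B).card = B.card + 1 := Finset.card_insert_of_notMem hwB
  have c2 : (insert v B).card = B.card + 1 := Finset.card_insert_of_notMem hvB
  have c3 : (insert v (insert w B)).card = B.card + 2 := by
    rw [Finset.card_insert_of_notMem hvwB, c1]
  rw [c1, c2, c3,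
    show F₂.card + 1 + 1 - B.card = (F₂.card - B.card) + 2 from by omega,
    show F₂.card + 1 + 1 - (B.card + 1) = (F₂.card - B.card) + 1 from by omega,
    show F₂.card + 1 + 1 - (B.card + 2) = F₂.card - B.card from by omega]
  have hkey := key B hBsub
  rw [pow_succ, pow_succ]
  linear_combination (-(-1:ℝ)^(F₂.card - B.card)) * hkey

-- ===== configuration-level auxiliaries =====

noncomputable def patch (s : A) (E : Set V) (z : V → A) : V → A := fun v => if v ∈ E then z v else s

noncomputable def extendP (s : A) {F : Set V} (p : F → A) : V → A :=
  fun v => if h : v ∈ F then p ⟨v, h⟩ else s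

lemma extendP_restrict (s : A) (F : Set V) (z : V → A) :
    extendP s (F.restrict z) = patch s F z := by
  funext v
  by_cases h : v ∈ F <;> simp [extendP, patch, h] <;> rfl

lemma patch_patch (s : A) {E F : Set V} (hEF : E ⊆ F) (z : V → A) :
    patch s E (patch s F z) = patch s E z := by
  funext v
  by_cases h : v ∈ E
  · simp [patch, h, hEF h]
  · simp [patch, h]

lemma patch_diff_subset (s : A) (E E' : Set V) (z : V → A) :
    {v | patch s E z v ≠ patch s E' z v} ⊆ E ∪ E' := by
  intro v hv
  by_contra hc
  simp only [Set.mem_union, not_or] at hc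
  exact hv (by simp [patch, hc.1, hc.2])

noncomputable def mf (M : (V → A) → (V → A) → ℝ) (s : A) (E : Set V) (z : V → A) : ℝ :=
  M (fun _ => s) (patch s E z)

noncomputable def Uhc (G : SimpleGraph V) (X : Set (V → A)) (M : (V → A) → (V → A) → ℝ)
    (s : A) : ∀ F : Set V, (F → A) → ℝ := fun F p =>
  if h : F.Finite ∧ G.IsClique F ∧ extendP s p ∈ X then
    ∑ E ∈ h.1.toFinset.powerset, (-1:ℝ)^(h.1.toFinset.card - E.card) * mf M s ↑E (extendP s p)
  else 0

variable (G : SimpleGraph V) (X : Set (V → A)) (M : (V → A) → (V → A) → ℝ) (s : A)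

lemma Uhc_nn : IsNNInteraction G (Uhc G X M s) := by
  intro F hF p
  exact dif_neg fun hc => hF ⟨hc.1, hc.2.1⟩

lemma M_self (hM : IsMarkovCocycle G X M) (x : V → A) (hx : x ∈ X) : M x x = 0 := by
  have hd : (x, x) ∈ Delta X := ⟨hx, hx, by simp⟩
  have := hM.2.1 x x x hd hd
  linarith

lemma Uhc_congr (F : Set V) (p : F → A) (q : V → A) (hq : extendP s p = q) :
    Uhc G X M s F p
      = if h : F.Finite ∧ G.IsClique F ∧ q ∈ X then
          ∑ E ∈ h.1.toFinset.powerset, (-1:ℝ)^(h.1.toFinset.card - E.card) * mf M s ↑E q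
        else 0 := by
  subst hq
  rfl

lemma mf_flip (hs : IsSafeSymbol X s) (hσ : (fun _ : V => s) ∈ X) (hM : IsMarkovCocycle G X M)
    (z : V → A) (hz : z ∈ X) (B : Set V) (hB : B.Finite) (v w : V) (hvw : v ≠ w)
    (hadj : ¬ G.Adj v w) :
    mf M s (insert v B) z - mf M s B z
      = mf M s (insert v (insert w B)) z - mf M s (insert w B) z := by
  have hpatchmem : ∀ E : Set V, patch s E z ∈ X := fun E => hs z hz E
  have hdelta : ∀ E E' : Set V, E.Finite → E'.Finite →
      (patch s E z, patch s E' z) ∈ Delta X :=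
    fun E E' hE hE' =>
      ⟨hpatchmem E, hpatchmem E', (hE.union hE').subset (patch_diff_subset s E E' z)⟩
  have key : ∀ B' : Set V, B'.Finite →
      mf M s (insert v B') z - mf M s B' z
        = M (patch s B' z) (patch s (insert v B') z) := by
    intro B' hB'
    have h1 : ((fun _ : V => s), patch s B' z) ∈ Delta X := by
      refine ⟨hσ, hpatchmem B', hB'.subset fun u hu => ?_⟩
      by_contra hc
      exact hu (by simp [patch, hc])
    have h2 := hdelta B' (insert v B') hB' (hB'.insert v)
    have := hM.2.1 _ _ _ h1 h2
    unfold mf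
    linarith
  rw [key B hB, key (insert w B) (hB.insert w)]
  refine hM.2.2 _ _ _ _ (hdelta B (insert v B) hB (hB.insert v))
    (hdelta (insert w B) (insert v (insert w B)) (hB.insert w) ((hB.insert w).insert v)) ?_
  refine ⟨{v}, Set.finite_singleton v, ?_, ?_⟩
  · intro u hu
    have huv : u ≠ v := by simpa using hu
    constructor <;> simp [patch, Set.mem_insert_iff, huv]
  · intro u hu
    have huw : u ≠ w := by
      rcases hu with hu | hu
      · have : u = v := by simpa using hu
        subst this; exact hvw
      · obtain ⟨_, v', hv', hadj'⟩ := hu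
        have : v' = v := by simpa using hv'
        subst this
        rintro rfl
        exact hadj hadj'.symm
    constructor <;> simp [patch, Set.mem_insert_iff, huw]

lemma Uz_eq (hs : IsSafeSymbol X s) (z : V → A) (hz : z ∈ X) (F : Finset V) :
    Uhc G X M s ↑F ((↑F : Set V).restrict z)
      = if G.IsClique (↑F : Set V) then
          ∑ E ∈ F.powerset, (-1:ℝ)^(F.card - E.card) * mf M s ↑E z
        else 0 := by
  rw [Uhc_congr G X M s ↑F _ _ (extendP_restrict s (↑F) z)]
  by_cases hcl : G.IsClique (↑F : Set V)
  · have hcond : (↑F : Set V).Finite ∧ G.IsClique (↑F : Set V) ∧ patch s ↑F z ∈ X :=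
      ⟨F.finite_toSet, hcl, hs z hz _⟩
    rw [dif_pos hcond, if_pos hcl]
    have ht : hcond.1.toFinset = F := by ext u; simp
    rw [ht]
    refine Finset.sum_congr rfl fun E hE => ?_
    unfold mf
    rw [patch_patch s (by exact_mod_cast Finset.mem_powerset.1 hE) z]
  · rw [dif_neg (fun hc => hcl hc.2.1), if_neg hcl]

lemma Uz_expand (hs : IsSafeSymbol X s) (hσ : (fun _ : V => s) ∈ X)
    (hM : IsMarkovCocycle G X M) (z : V → A) (hz : z ∈ X) (F : Finset V) :
    Uhc G X M s ↑F ((↑F : Set V).restrict z)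
      = ∑ E ∈ F.powerset, (-1:ℝ)^(F.card - E.card) * mf M s ↑E z := by
  rw [Uz_eq G X M s hs z hz F]
  split_ifs with hcl
  · rfl
  · symm
    obtain ⟨v, hv, w, hw, hvw, hadj⟩ : ∃ v ∈ F, ∃ w ∈ F, v ≠ w ∧ ¬ G.Adj v w := by
      by_contra hc
      push_neg at hc
      exact hcl fun a ha b hb hab => hc a (Finset.mem_coe.1 ha) b (Finset.mem_coe.1 hb) hab
    refine pair_cancel (fun E => mf M s ↑E z) F v w hv hw hvw fun B hB => ?_
    have hflip := mf_flip G X M s hs hσ hM z hz ↑B B.finite_toSet v w hvw hadj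
    simpa [Finset.coe_insert] using hflip

lemma sum_Uz (hs : IsSafeSymbol X s) (hσ : (fun _ : V => s) ∈ X)
    (hM : IsMarkovCocycle G X M) (z : V → A) (hz : z ∈ X) (F : Finset V) :
    ∑ E ∈ F.powerset, Uhc G X M s ↑E ((↑E : Set V).restrict z) = mf M s ↑F z := by
  rw [Finset.sum_congr rfl fun E _ => Uz_expand G X M s hs hσ hM z hz E]
  exact mobius_double F fun E => mf M s ↑E z

lemma Uz_zero (hs : IsSafeSymbol X s) (z : V → A) (hz : z ∈ X) (F : Finset V)
    (v : V) (hv : v ∈ F) (hvs : z v = s) :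
    Uhc G X M s ↑F ((↑F : Set V).restrict z) = 0 := by
  rw [Uz_eq G X M s hs z hz F]
  split_ifs with hcl
  · refine single_cancel (fun E => mf M s ↑E z) F v hv fun B hB => ?_
    have hpp : patch s (↑(insert v B) : Set V) z = patch s (↑B : Set V) z := by
      funext u
      by_cases huv : u = v
      · subst huv; simp [patch, hvs]
      · simp [patch, Finset.coe_insert, Set.mem_insert_iff, huv]
    show mf M s ↑(insert v B) z = mf M s ↑B z
    unfold mf
    rw [hpp]
  · rfl

lemma Uhc_sigma_zero (hs : IsSafeSymbol X s) (hσ : (fun _ : V => s) ∈ X)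
    (hM : IsMarkovCocycle G X M) (E : Finset V) :
    Uhc G X M s ↑E ((↑E : Set V).restrict (fun _ => s)) = 0 := by
  rcases E.eq_empty_or_nonempty with rfl | ⟨v, hv⟩
  · rw [Uz_eq G X M s hs (fun _ => s) hσ ∅]
    rw [if_pos (by simp)]
    simp only [Finset.powerset_empty, Finset.sum_singleton, Finset.card_empty]
    have hpe : patch s (↑(∅ : Finset V)) (fun _ : V => s) = (fun _ : V => s) := by
      funext u; simp [patch]
    rw [pow_zero, one_mul]
    unfold mf
    rw [hpe]
    exact M_self G X M hM _ hσ
  · exact Uz_zero G X M s hs (fun _ => s) hσ E v hv rfl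

lemma support_lemma (U : ∀ F : Set V, (F → A) → ℝ) (hU : IsNNInteraction G U)
    (x y : V → A) (F : Set V)
    (h : U F (F.restrict y) - U F (F.restrict x) ≠ 0) :
    F.Finite ∧ G.IsClique F ∧ ∃ v ∈ F, x v ≠ y v ∧ F ⊆ insert v (G.neighborSet v) := by
  have hfc : F.Finite ∧ G.IsClique F := by
    by_contra hc
    rw [hU F hc, hU F hc] at h
    simp at h
  refine ⟨hfc.1, hfc.2, ?_⟩
  have hne : F.restrict x ≠ F.restrict y := fun he => h (by rw [← he]; ring)
  obtain ⟨⟨v, hv⟩, hvne⟩ := Function.ne_iff.1 hne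
  refine ⟨v, hv, hvne, fun u hu => ?_⟩
  by_cases huv : u = v
  · simp [huv]
  · exact Set.mem_insert_iff.2 (Or.inr (hfc.2 hv hu fun h' => huv h'.symm))

lemma gibbs_support_finite (hlf : ∀ v : V, (G.neighborSet v).Finite)
    (U : ∀ F : Set V, (F → A) → ℝ) (hU : IsNNInteraction G U)
    {x y : V → A} (hD : {v | x v ≠ y v}.Finite) :
    (Function.support fun F : Set V => U F (F.restrict y) - U F (F.restrict x)).Finite := by
  have hK : ({v | x v ≠ y v} ∪ ⋃ v ∈ {v | x v ≠ y v}, G.neighborSet v).Finite :=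
    hD.union (hD.biUnion fun v _ => hlf v)
  refine hK.finite_subsets.subset fun F hF => ?_
  obtain ⟨hfin, hcl, v, hvF, hvne, hsub⟩ := support_lemma G U hU x y F hF
  refine hsub.trans (Set.insert_subset (Set.mem_union_left _ hvne) fun u hu =>
    Set.mem_union_right _ (Set.mem_biUnion hvne hu))

lemma finsum_eq_powerset_sum (f : Set V → ℝ) (K' : Finset V)
    (h : ∀ F, f F ≠ 0 → ∃ E ∈ K'.powerset, (↑E : Set V) = F) :
    ∑ᶠ F, f F = ∑ E ∈ K'.powerset, f ↑E := by
  rw [finsum_eq_finset_sum_of_support_subset f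
    (s := K'.powerset.image (fun E : Finset V => (E : Set V)))]
  · exact Finset.sum_image fun a _ b _ hab => Finset.coe_injective hab
  · intro F hF
    rcases h F hF with ⟨E, hE, rfl⟩
    exact Finset.mem_coe.2 (Finset.mem_image.2 ⟨E, hE, rfl⟩)

lemma gibbs_sigma (hlf : ∀ v : V, (G.neighborSet v).Finite) (hs : IsSafeSymbol X s)
    (hσ : (fun _ : V => s) ∈ X) (hM : IsMarkovCocycle G X M)
    (z : V → A) (hz : z ∈ X) (hzf : {v | z v ≠ s}.Finite) :
    gibbsSum (Uhc G X M s) (fun _ => s) z = M (fun _ => s) z := by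
  have hU := Uhc_nn G X M s
  have hK : ({v | z v ≠ s} ∪ ⋃ v ∈ {v | z v ≠ s}, G.neighborSet v).Finite :=
    hzf.union (hzf.biUnion fun v _ => hlf v)
  set K' := hK.toFinset with hK'def
  unfold gibbsSum
  rw [finsum_eq_powerset_sum _ K' ?hsupp]
  case hsupp =>
    intro F hF
    obtain ⟨hfin, hcl, v, hvF, hvne, hsub⟩ := support_lemma G _ hU (fun _ => s) z F hF
    refine ⟨hfin.toFinset, Finset.mem_powerset.2 ?_, hfin.coe_toFinset⟩
    intro u hu
    have huF : u ∈ F := hfin.mem_toFinset.1 hu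
    rw [hK'def, Set.Finite.mem_toFinset]
    have hvD : v ∈ {v | z v ≠ s} := fun h' => hvne h'.symm
    rcases Set.mem_insert_iff.1 (hsub huF) with rfl | hnb
    · exact Set.mem_union_left _ hvD
    · exact Set.mem_union_right _ (Set.mem_biUnion hvD hnb)
  · have step : ∀ E ∈ K'.powerset,
        Uhc G X M s ↑E ((↑E : Set V).restrict z)
          - Uhc G X M s ↑E ((↑E : Set V).restrict (fun _ => s))
          = Uhc G X M s ↑E ((↑E : Set V).restrict z) := by
      intro E _
      rw [Uhc_sigma_zero G X M s hs hσ hM E]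
      ring
    rw [Finset.sum_congr rfl step, sum_Uz G X M s hs hσ hM z hz K']
    unfold mf
    congr 1
    funext u
    by_cases h : u ∈ (↑K' : Set V)
    · simp [patch, h]
    · have hzu : z u = s := by
        by_contra hc
        exact h (by
          rw [hK'def, Set.Finite.coe_toFinset]
          exact Set.mem_union_left _ hc)
      simp [patch, h, hzu]

lemma M_eq_gibbs (hlf : ∀ v : V, (G.neighborSet v).Finite) (hs : IsSafeSymbol X s)
    (hσ : (fun _ : V => s) ∈ X) (hM : IsMarkovCocycle G X M)
    (x y : V → A) (hxy : (x, y) ∈ Delta X) :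
    M x y = gibbsSum (Uhc G X M s) x y := by
  obtain ⟨hx, hy, hD⟩ := hxy
  have hU := Uhc_nn G X M s
  have hN : ({v | x v ≠ y v} ∪ ⋃ v ∈ {v | x v ≠ y v}, G.neighborSet v).Finite :=
    hD.union (hD.biUnion fun v _ => hlf v)
  set D := {v | x v ≠ y v} with hDdef
  set N := D ∪ ⋃ v ∈ D, G.neighborSet v with hNdef
  have hDN : D ⊆ N := Set.subset_union_left
  have hnbd : ∀ v ∈ D, insert v (G.neighborSet v) ⊆ N := by
    intro v hv u hu
    rcases Set.mem_insert_iff.1 hu with rfl | hu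
    · exact hDN hv
    · exact Set.mem_union_right _ (Set.mem_biUnion hv hu)
  set x' := patch s N x with hx'def
  set y' := patch s N y with hy'def
  have hx'X : x' ∈ X := hs x hx N
  have hy'X : y' ∈ X := hs y hy N
  have hxx' : ∀ u ∈ N, x u = x' u := fun u hu => by simp [hx'def, patch, hu]
  have hyy' : ∀ u ∈ N, y u = y' u := fun u hu => by simp [hy'def, patch, hu]
  have hx'y' : ∀ u, u ∉ D → x' u = y' u := by
    intro u hu
    have hxyu : x u = y u := not_not.1 hu
    by_cases huN : u ∈ N
    · rw [← hxx' u huN, ← hyy' u huN, hxyu]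
    · simp [hx'def, hy'def, patch, huN]
  have hD' : {v | x' v ≠ y' v}.Finite :=
    hD.subset fun v hv => by by_contra h; exact hv (hx'y' v h)
  have hDel : (x, y) ∈ Delta X := ⟨hx, hy, hD⟩
  have hDel' : (x', y') ∈ Delta X := ⟨hx'X, hy'X, hD'⟩
  have hsx' : {v | (fun _ : V => s) v ≠ x' v}.Finite := by
    refine hN.subset fun v hv => ?_
    by_contra hvN
    apply hv
    simp [hx'def, patch, hvN]
  have hsy' : {v | (fun _ : V => s) v ≠ y' v}.Finite := by
    refine hN.subset fun v hv => ?_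
    by_contra hvN
    apply hv
    simp [hy'def, patch, hvN]
  -- step (a)
  have ha : M x y = M x' y' := by
    refine hM.2.2 x y x' y' hDel hDel' ⟨D, hD, ?_, ?_⟩
    · exact fun u hu => ⟨not_not.1 hu, hx'y' u hu⟩
    · intro u hu
      have huN : u ∈ N := by
        rcases hu with hu | hu
        · exact hDN hu
        · obtain ⟨_, v, hv, hadj⟩ := hu
          exact Set.mem_union_right _ (Set.mem_biUnion hv hadj.symm)
      exact ⟨hxx' u huN, hyy' u huN⟩
  -- step (b)
  have hb : gibbsSum (Uhc G X M s) x y = gibbsSum (Uhc G X M s) x' y' := by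
    refine finsum_congr fun F => ?_
    by_cases hFN : F ⊆ N
    · have h1 : F.restrict x = F.restrict x' := funext fun u => hxx' u (hFN u.2)
      have h2 : F.restrict y = F.restrict y' := funext fun u => hyy' u (hFN u.2)
      rw [h1, h2]
    · have e1 : Uhc G X M s F (F.restrict y) - Uhc G X M s F (F.restrict x) = 0 := by
        by_contra h
        obtain ⟨hfin, hcl, v, hvF, hvne, hsub⟩ := support_lemma G _ hU x y F h
        exact hFN (hsub.trans (hnbd v hvne))
      have e2 : Uhc G X M s F (F.restrict y') - Uhc G X M s F (F.restrict x') = 0 := by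
        by_contra h
        obtain ⟨hfin, hcl, v, hvF, hvne, hsub⟩ := support_lemma G _ hU x' y' F h
        have hvD : v ∈ D := by by_contra hc; exact hvne (hx'y' v hc)
        exact hFN (hsub.trans (hnbd v hvD))
      rw [e1, e2]
  -- step (c)
  have hcx : gibbsSum (Uhc G X M s) (fun _ => s) x' = M (fun _ => s) x' :=
    gibbs_sigma G X M s hlf hs hσ hM x' hx'X (hsx'.subset fun v hv => Ne.symm hv)
  have hcy : gibbsSum (Uhc G X M s) (fun _ => s) y' = M (fun _ => s) y' :=
    gibbs_sigma G X M s hlf hs hσ hM y' hy'X (hsy'.subset fun v hv => Ne.symm hv)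
  have hsplit : gibbsSum (Uhc G X M s) x' y'
      = gibbsSum (Uhc G X M s) (fun _ => s) y' - gibbsSum (Uhc G X M s) (fun _ => s) x' := by
    unfold gibbsSum
    rw [← finsum_sub_distrib (gibbs_support_finite G hlf _ hU hsy')
      (gibbs_support_finite G hlf _ hU hsx')]
    exact finsum_congr fun F => by ring
  have hd1 : ((fun _ : V => s), x') ∈ Delta X := ⟨hσ, hx'X, hsx'⟩
  have hadd := hM.2.1 (fun _ => s) x' y' hd1 hDel'
  rw [ha, hb, hsplit, hcx, hcy]
  linarith

-- ===== invariance =====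

lemma confAct_confAct_inv (g : Equiv.Perm V) (x : V → A) :
    confAct g⁻¹ (confAct g x) = x := by
  funext v
  simp [confAct]

lemma mem_iff_confAct {S : Subgroup (Equiv.Perm V)} (hXinv : InvariantSpace S X)
    {g : Equiv.Perm V} (hg : g ∈ S) (z : V → A) :
    z ∈ X ↔ confAct g z ∈ X := by
  constructor
  · intro hz
    rw [← hXinv g hg]
    exact Set.mem_image_of_mem _ hz
  · intro hz
    have h2 := hXinv g⁻¹ (inv_mem hg)
    rw [← confAct_confAct_inv g z, ← h2]
    exact Set.mem_image_of_mem _ hz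

lemma patch_image (g : Equiv.Perm V) (E : Set V) (z : V → A) :
    patch s (⇑g '' E) (confAct g z) = confAct g (patch s E z) := by
  funext v
  have hmem : v ∈ ⇑g '' E ↔ g⁻¹ v ∈ E := by
    constructor
    · rintro ⟨u, hu, rfl⟩; simpa using hu
    · intro h; exact ⟨g⁻¹ v, h, by simp⟩
  by_cases h : g⁻¹ v ∈ E
  · simp only [patch, confAct]
    rw [if_pos (hmem.2 h), if_pos h]
  · simp only [patch, confAct]
    rw [if_neg (fun hc => h (hmem.1 hc)), if_neg h]

lemma clique_image_iff (g : Equiv.Perm V)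
    (hg1 : ∀ u v : V, G.Adj (g u) (g v) ↔ G.Adj u v) (F : Set V) :
    G.IsClique (⇑g '' F) ↔ G.IsClique F := by
  constructor
  · intro h a ha b hb hab
    have := h (Set.mem_image_of_mem _ ha) (Set.mem_image_of_mem _ hb)
      (fun hc => hab (g.injective hc))
    exact (hg1 a b).1 this
  · rintro h a ha b hb hab
    obtain ⟨a', ha', rfl⟩ := ha
    obtain ⟨b', hb', rfl⟩ := hb
    exact (hg1 a' b').2 (h ha' hb' fun hc => hab (by rw [hc]))

lemma Uhc_inv (g : Equiv.Perm V)
    (hg1 : ∀ u v : V, G.Adj (g u) (g v) ↔ G.Adj u v)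
    (hg2 : ∀ z : V → A, z ∈ X ↔ confAct g z ∈ X)
    (hg3 : ∀ x y : V → A, M (confAct g x) (confAct g y) = M x y)
    (F : Set V) (x : V → A) :
    Uhc G X M s (⇑g '' F) ((⇑g '' F).restrict (confAct g x))
      = Uhc G X M s F (F.restrict x) := by
  have hmf : ∀ E : Set V,
      mf M s (⇑g '' E) (confAct g (patch s F x)) = mf M s E (patch s F x) := by
    intro E
    unfold mf
    rw [patch_image]
    exact hg3 (fun _ => s) (patch s E (patch s F x))
  rw [Uhc_congr G X M s _ _ _ (by rw [extendP_restrict, patch_image]),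
    Uhc_congr G X M s _ _ _ (extendP_restrict s F x)]
  by_cases h : F.Finite ∧ G.IsClique F ∧ patch s F x ∈ X
  · have himg : (⇑g '' F).Finite ∧ G.IsClique (⇑g '' F) ∧ confAct g (patch s F x) ∈ X :=
      ⟨h.1.image _, (clique_image_iff G g hg1 F).2 h.2.1, (hg2 _).1 h.2.2⟩
    rw [dif_pos himg, dif_pos h]
    have ht : himg.1.toFinset = h.1.toFinset.image ⇑g := by
      ext u
      simp only [Set.Finite.mem_toFinset, Finset.mem_image]
      constructor
      · rintro ⟨a, ha, rfl⟩
        exact ⟨a, by simpa [Set.Finite.mem_toFinset] using ha, rfl⟩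
      · rintro ⟨a, ha, rfl⟩
        exact ⟨a, by simpa [Set.Finite.mem_toFinset] using ha, rfl⟩
    rw [ht, Finset.card_image_of_injective _ g.injective]
    refine Finset.sum_nbij' (fun E => E.image ⇑g⁻¹) (fun E => E.image ⇑g) ?_ ?_ ?_ ?_ ?_
    · intro E hE
      rw [Finset.mem_powerset] at hE ⊢
      intro u hu
      obtain ⟨u', hu', rfl⟩ := Finset.mem_image.1 hu
      obtain ⟨u'', hu'', rfl⟩ := Finset.mem_image.1 (hE hu')
      simpa using hu''
    · intro E hE
      rw [Finset.mem_powerset] at hE ⊢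
      exact Finset.image_subset_image hE
    · intro E hE
      ext u
      simp [Finset.mem_image]
    · intro E hE
      ext u
      simp [Finset.mem_image]
    · intro E hE
      have hcard : (E.image ⇑g⁻¹).card = E.card := Finset.card_image_of_injective _ (g⁻¹).injective
      have hset : (↑E : Set V) = ⇑g '' ↑(E.image ⇑g⁻¹) := by
        rw [Finset.coe_image, ← Set.image_comp]
        simp
      rw [hcard, hset, hmf]
  · rw [dif_neg h, dif_neg ?_]
    intro hc
    refine h ⟨?_, (clique_image_iff G g hg1 F).1 hc.2.1, (hg2 _).2 hc.2.2⟩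
    have := hc.1
    have hF : F = ⇑g⁻¹ '' (⇑g '' F) := by
      rw [← Set.image_comp]
      simp
    rw [hF]
    exact this.image _

lemma gibbsSum_add (hlf : ∀ v : V, (G.neighborSet v).Finite)
    (U : ∀ F : Set V, (F → A) → ℝ) (hU : IsNNInteraction G U) (x y z : V → A)
    (hxy : {v | x v ≠ y v}.Finite) (hyz : {v | y v ≠ z v}.Finite) :
    gibbsSum U x z = gibbsSum U x y + gibbsSum U y z := by
  unfold gibbsSum
  rw [← finsum_add_distrib (gibbs_support_finite G hlf U hU hxy)
    (gibbs_support_finite G hlf U hU hyz)]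
  exact finsum_congr fun F => by ring

lemma gibbsSum_sim (U : ∀ F : Set V, (F → A) → ℝ) (hU : IsNNInteraction G U)
    (x y z w : V → A) (hsim : MarkovSimilar G x y z w) :
    gibbsSum U x y = gibbsSum U z w := by
  obtain ⟨S, hSfin, hoff, hon⟩ := hsim
  refine finsum_congr fun F => ?_
  by_cases hFS : ∀ u ∈ F, u ∈ S ∪ boundary G S
  · have h1 : F.restrict x = F.restrict z := funext fun u => (hon u (hFS u u.2)).1
    have h2 : F.restrict y = F.restrict w := funext fun u => (hon u (hFS u u.2)).2
    rw [h1, h2]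
  · push_neg at hFS
    obtain ⟨u₀, hu₀F, hu₀⟩ := hFS
    have key : ∀ a b : V → A, (∀ u, u ∉ S → a u = b u) →
        U F (F.restrict b) - U F (F.restrict a) = 0 := by
      intro a b hab
      by_contra h
      obtain ⟨hfin, hcl, v, hvF, hvne, hsub⟩ := support_lemma G U hU a b F h
      have hvS : v ∈ S := by
        by_contra hvs
        exact hvne (hab v hvs)
      apply hu₀
      rcases Set.mem_insert_iff.1 (hsub hu₀F) with rfl | hnb
      · exact Set.mem_union_left _ hvS
      · by_cases hu₀S : u₀ ∈ S
        · exact Set.mem_union_left _ hu₀S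
        · exact Set.mem_union_right _ ⟨hu₀S, v, hvS, hnb.symm⟩
    rw [key x y fun u hu => (hoff u hu).1, key z w fun u hu => (hoff u hu).2]

lemma gibbsSum_perm (U : ∀ F : Set V, (F → A) → ℝ) (g : Equiv.Perm V)
    (hUg : ∀ (F : Set V) (x : V → A),
      U (⇑g '' F) ((⇑g '' F).restrict (confAct g x)) = U F (F.restrict x))
    (x y : V → A) :
    gibbsSum U (confAct g x) (confAct g y) = gibbsSum U x y := by
  unfold gibbsSum
  refine (finsum_eq_of_bijective (fun F : Set V => ⇑g '' F) ⟨?_, ?_⟩ fun F => ?_).symm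
  · exact Set.image_injective.2 g.injective
  · intro F
    refine ⟨⇑g⁻¹ '' F, ?_⟩
    show ⇑g '' (⇑g⁻¹ '' F) = F
    rw [← Set.image_comp]
    simp
  · rw [hUg F x, hUg F y]

lemma delta_perm {S : Subgroup (Equiv.Perm V)} (hXinv : InvariantSpace S X)
    {g : Equiv.Perm V} (hg : g ∈ S) (x y : V → A)
    (h : (x, y) ∈ Delta X) : (confAct g x, confAct g y) ∈ Delta X := by
  obtain ⟨hx, hy, hD⟩ := h
  refine ⟨(mem_iff_confAct X hXinv hg x).1 hx, (mem_iff_confAct X hXinv hg y).1 hy, ?_⟩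
  have heq : {v | confAct g x v ≠ confAct g y v} = ⇑g '' {v | x v ≠ y v} := by
    ext v
    constructor
    · intro hv
      exact ⟨g⁻¹ v, hv, by simp⟩
    · rintro ⟨u, hu, rfl⟩
      simpa [confAct] using hu
  rw [heq]
  exact hD.image _

end HCAux

/-- strong Hammersley-Clifford theorem, part 2. On a `G`-invariant
topological Markov field with a safe symbol, every `G`-invariant Markov cocycle is a
Gibbs cocycle with some `G`-invariant nearest neighbour interaction: `𝐌^G_X = 𝐆^G_X`. -/
theorem statement5 [Countable V] [Fintype A] [TopologicalSpace A] [DiscreteTopology A]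
    (G : SimpleGraph V) (hlf : ∀ v : V, (G.neighborSet v).Finite)
    (S : Subgroup (Equiv.Perm V)) (hS : PreservesAdj G S)
    (X : Set (V → A)) (hX : IsTMF G X) (hXinv : InvariantSpace S X)
    (s : A) (hs : IsSafeSymbol X s) :
    markovSetInv G S X = gibbsSetInv G S X := by
  ext M
  simp only [markovSetInv, gibbsSetInv, Set.mem_setOf_eq]
  constructor
  · rintro ⟨hM, hMinv⟩
    refine ⟨hM.1, ?_⟩
    by_cases hσ : (fun _ : V => s) ∈ X
    · refine ⟨Uhc G X M s, Uhc_nn G X M s, ?_, ?_⟩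
      · intro g hg F x
        exact Uhc_inv G X M s g (hS g hg) (fun z => mem_iff_confAct X hXinv hg z)
          (hMinv g hg) F x
      · intro x y hxy
        exact M_eq_gibbs G X M s hlf hs hσ hM x y hxy
    · have hXe : X = ∅ := by
        rw [Set.eq_empty_iff_forall_notMem]
        intro x hx
        apply hσ
        have h1 := hs x hx ∅
        refine Set.mem_of_eq_of_mem ?_ h1
        funext v
        simp
      refine ⟨fun _ _ => 0, fun F h p => rfl, fun g hg F x => rfl, fun x y hxy => ?_⟩
      rw [hXe] at hxy
      exact absurd hxy.1 (Set.notMem_empty x)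
  · rintro ⟨hM0, U, hU, hUinv, hMg⟩
    have hdadd : ∀ x y z : V → A, (x, y) ∈ Delta X → (y, z) ∈ Delta X →
        (x, z) ∈ Delta X := by
      intro x y z hxy hyz
      refine ⟨hxy.1, hyz.2.1, (hxy.2.2.union hyz.2.2).subset fun v hv => ?_⟩
      by_contra hc
      simp only [Set.mem_union, Set.mem_setOf_eq, not_or, not_not] at hc
      exact hv (hc.1.trans hc.2)
    refine ⟨⟨hM0, ?_, ?_⟩, ?_⟩
    · intro x y z hxy hyz
      rw [hMg x y hxy, hMg y z hyz, hMg x z (hdadd x y z hxy hyz)]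
      exact gibbsSum_add G hlf U hU x y z hxy.2.2 hyz.2.2
    · intro x y z w hxy hzw hsim
      rw [hMg x y hxy, hMg z w hzw]
      exact gibbsSum_sim G U hU x y z w hsim
    · intro g hg x y
      by_cases hxy : (x, y) ∈ Delta X
      · rw [hMg _ _ (delta_perm X hXinv hg x y hxy), hMg x y hxy]
        exact gibbsSum_perm U g (fun F x => hUinv g hg F x) x y
      · have h2 : (confAct g x, confAct g y) ∉ Delta X := by
          intro hc
          apply hxy
          have h3 := delta_perm X hXinv (inv_mem hg) _ _ hc
          rwa [confAct_confAct_inv, confAct_confAct_inv] at h3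
        rw [hM0 x y hxy, hM0 _ _ h2]

end HC
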